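/- For (m,ρ) in A = {(m,ρ): ρ>0, |m|<ρ}, the infimum over (β,μ) ∈ A of βm + μρ + log(1/(μ+β) + 1/(μ-β)) equals 1 + log((√((ρ+m)/2) + √((ρ-m)/2))²). -/

import Mathlib

/-- Legendre duality for the orthoplicial model: for `(m,ρ)` in the cone
`A = {(m,ρ): ρ>0, |m|<ρ}`,
`inf_{(β,μ)∈A} [βm + μρ + log(1/(μ+β)+1/(μ-β))] = 1 + log((√((ρ+m)/2)+√((ρ-m)/2))²)`. -/
theorem legendre_duality_entropy (m ρ : ℝ) (hρ : 0 < ρ) (hm : |m| < ρ) :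
    sInf ((fun p : ℝ × ℝ => p.1 * m + p.2 * ρ + Real.log (1/(p.2 + p.1) + 1/(p.2 - p.1))) ''
        {p : ℝ × ℝ | 0 < p.2 ∧ |p.1| < p.2}) =
      1 + Real.log ((Real.sqrt ((ρ + m)/2) + Real.sqrt ((ρ - m)/2)) ^ 2) := by
  obtain ⟨hm1, hm2⟩ := abs_lt.mp hm
  have hp : 0 < (ρ + m)/2 := by linarith
  have hq : 0 < (ρ - m)/2 := by linarith
  set sp := Real.sqrt ((ρ + m)/2) with hsp'
  set sq := Real.sqrt ((ρ - m)/2) with hsq'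
  have hsp : 0 < sp := Real.sqrt_pos.mpr hp
  have hsq : 0 < sq := Real.sqrt_pos.mpr hq
  have hsp2 : sp ^ 2 = (ρ + m)/2 := Real.sq_sqrt hp.le
  have hsq2 : sq ^ 2 = (ρ - m)/2 := Real.sq_sqrt hq.le
  have hc : 0 < (sp + sq) ^ 2 := by positivity
  -- lower bound
  have hlb : ∀ y ∈ ((fun p : ℝ × ℝ => p.1 * m + p.2 * ρ +
      Real.log (1/(p.2 + p.1) + 1/(p.2 - p.1))) ''
      {p : ℝ × ℝ | 0 < p.2 ∧ |p.1| < p.2}),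
      1 + Real.log ((sp + sq) ^ 2) ≤ y := by
    rintro y ⟨⟨β, μ⟩, ⟨hμ, hβ⟩, rfl⟩
    obtain ⟨hβ1, hβ2⟩ := abs_lt.mp hβ
    simp only at *
    have hA : 0 < μ + β := by linarith
    have hB : 0 < μ - β := by linarith
    have ht : 0 < 1/(μ + β) + 1/(μ - β) := by positivity
    set t := 1/(μ + β) + 1/(μ - β) with ht'
    have hlog : Real.log ((sp + sq) ^ 2) - Real.log t ≤ (sp + sq) ^ 2 / t - 1 := by
      have := Real.log_le_sub_one_of_pos (show 0 < (sp + sq) ^ 2 / t by positivity)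
      rwa [Real.log_div (ne_of_gt hc) (ne_of_gt ht)] at this
    have key : (sp + sq) ^ 2 * ((μ + β) * (μ - β)) ≤
        ((μ + β) * ((ρ + m)/2) + (μ - β) * ((ρ - m)/2)) * ((μ + β) + (μ - β)) := by
      rw [← hsp2, ← hsq2]
      nlinarith [sq_nonneg ((μ + β) * sp - (μ - β) * sq)]
    have hβm : β * m + μ * ρ = (μ + β) * ((ρ + m)/2) + (μ - β) * ((ρ - m)/2) := by ring
    have htval : t = ((μ + β) + (μ - β)) / ((μ + β) * (μ - β)) := by
      rw [ht']; field_simp; ring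
    have hdiv : (sp + sq) ^ 2 / t ≤ (μ + β) * ((ρ + m)/2) + (μ - β) * ((ρ - m)/2) := by
      rw [div_le_iff₀ ht, htval, ← mul_div_assoc,
        le_div_iff₀ (mul_pos hA hB)]
      exact key
    rw [hβm]
    nlinarith [hlog, hdiv]
  -- witness
  set a := 1/(sp * (sp + sq)) with ha'
  set b := 1/(sq * (sp + sq)) with hb'
  have ha : 0 < a := by positivity
  have hb : 0 < b := by positivity
  have hmem : ((a - b)/2, (a + b)/2) ∈ {p : ℝ × ℝ | 0 < p.2 ∧ |p.1| < p.2} := by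
    constructor
    · simp only; positivity
    · simp only [abs_lt]; constructor <;> [linarith; linarith]
  have hval : (fun p : ℝ × ℝ => p.1 * m + p.2 * ρ +
      Real.log (1/(p.2 + p.1) + 1/(p.2 - p.1))) ((a - b)/2, (a + b)/2)
      = 1 + Real.log ((sp + sq) ^ 2) := by
    simp only
    have h1 : (a + b)/2 + (a - b)/2 = a := by ring
    have h2 : (a + b)/2 - (a - b)/2 = b := by ring
    rw [h1, h2]
    have hsum : 1/a + 1/b = (sp + sq) ^ 2 := by
      rw [ha', hb', one_div_one_div, one_div_one_div]; ring
    have hlin : (a - b)/2 * m + (a + b)/2 * ρ = 1 := by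
      have : (a - b)/2 * m + (a + b)/2 * ρ = a * ((ρ + m)/2) + b * ((ρ - m)/2) := by ring
      rw [this, ha', hb', ← hsp2, ← hsq2]
      field_simp
    rw [hsum, hlin]
  refine le_antisymm (csInf_le ⟨1 + Real.log ((sp + sq) ^ 2), fun y hy => hlb y hy⟩
    ⟨((a - b)/2, (a + b)/2), hmem, hval⟩) (le_csInf ⟨_, ⟨((a - b)/2, (a + b)/2), hmem, hval⟩⟩ hlb)
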